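/- Let h>0, α,β∈(0,1] and k,s∈ℕ. Then for every n∈ℕ, the fractional h-sum of order β of the function φ_{k,s} satisfies (S_β φ_{k,s})(n) = φ_{k,s+1}(n). (This is the second power-rule formula of Proposition 5 of the paper, with the evaluation point made precise: applying the β-order fractional h-sum to φ_{k,s} raises the index s by one without shifting the argument.) -/

import Mathlib

/-- `c γ m = Γ(γ+m)/(Γ(γ)·Γ(m+1))`. -/
noncomputable def cCoeff (γ : ℝ) (m : ℕ) : ℝ :=
  Real.Gamma (γ + m) / (Real.Gamma γ * Real.Gamma (m + 1))

/-- Fractional `h`-sum of order `γ`: `(S_γ u)(n) = h^γ·∑_{k=0}^{n} c_γ(n−k)·u(k)`. -/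
noncomputable def fracSum (h γ : ℝ) (u : ℕ → ℝ) (n : ℕ) : ℝ :=
  h ^ γ * ∑ k ∈ Finset.range (n + 1), cCoeff γ (n - k) * u k

/-- The function `φ_{k,s}` of the paper. -/
noncomputable def phi (h α β : ℝ) (k s : ℕ) (n : ℤ) : ℝ :=
  if (k : ℤ) ≤ n then
    Real.Gamma ((n : ℝ) - (k : ℝ) + 1 + (k : ℝ) * α + (s : ℝ) * β)
      / (Real.Gamma ((k : ℝ) * α + (s : ℝ) * β + 1) * Real.Gamma ((n : ℝ) - (k : ℝ) + 1))
      * h ^ ((k : ℝ) * α + (s : ℝ) * β)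
  else 0

section Aux
open Finset Polynomial

lemma asc_eval_succ (x : ℝ) (m : ℕ) :
    (ascPochhammer ℝ (m+1)).eval x = (ascPochhammer ℝ m).eval x * (x + m) := by
  rw [ascPochhammer_succ_right]; simp [eval_mul]

lemma asc_vandermonde (x y : ℝ) : ∀ N : ℕ,
    ∑ m ∈ range (N+1), (N.choose m : ℝ) *
      ((ascPochhammer ℝ (N-m)).eval x * (ascPochhammer ℝ m).eval y)
      = (ascPochhammer ℝ N).eval (x+y) := by
  intro N
  induction N with
  | zero => simp
  | succ N ih =>
    set f : ℕ → ℕ → ℝ := fun N m => (N.choose m : ℝ) *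
      ((ascPochhammer ℝ (N-m)).eval x * (ascPochhammer ℝ m).eval y) with hf
    set g : ℕ → ℝ := fun m => (N.choose m : ℝ) *
      ((ascPochhammer ℝ (N+1-m)).eval x * (ascPochhammer ℝ m).eval y) with hg
    have step1 : ∑ m ∈ range (N+2), f (N+1) m
        = (∑ m ∈ range (N+1), f (N+1) (m+1)) + (ascPochhammer ℝ (N+1)).eval x := by
      rw [Finset.sum_range_succ' (f (N+1)) (N+1)]
      simp [hf]
    have split : ∀ m ∈ range (N+1), f (N+1) (m+1)
        = (N.choose m : ℝ) * ((ascPochhammer ℝ (N-m)).eval x * (ascPochhammer ℝ (m+1)).eval y)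
          + g (m+1) := by
      intro m hm
      simp only [hf, hg, Nat.choose_succ_succ, Nat.succ_sub_succ]
      push_cast; ring
    have hBsum : ∑ m ∈ range (N+1), g (m+1)
        = (∑ m ∈ range (N+1), g m) - (ascPochhammer ℝ (N+1)).eval x := by
      rw [Finset.sum_range_succ (fun m => g (m+1)) N, Finset.sum_range_succ' g N]
      simp [hg, Nat.choose_succ_self]
    rw [step1, Finset.sum_congr rfl split, Finset.sum_add_distrib, hBsum]
    have combine : ∀ m ∈ range (N+1),
        (N.choose m : ℝ) * ((ascPochhammer ℝ (N-m)).eval x * (ascPochhammer ℝ (m+1)).eval y)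
          + g m = f N m * (x + y + N) := by
      intro m hm
      have hmN : m ≤ N := Nat.lt_succ_iff.mp (Finset.mem_range.mp hm)
      have h1 : N + 1 - m = (N - m) + 1 := by omega
      have hc : ((N - m : ℕ) : ℝ) = (N : ℝ) - m := by
        push_cast [Nat.cast_sub hmN]; ring
      simp only [hf, hg, h1, asc_eval_succ, hc]
      ring
    have : ((∑ m ∈ range (N+1), (N.choose m : ℝ) *
          ((ascPochhammer ℝ (N-m)).eval x * (ascPochhammer ℝ (m+1)).eval y))
        + (∑ m ∈ range (N+1), g m)) = (∑ m ∈ range (N+1), f N m) * (x + y + N) := by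
      rw [← Finset.sum_add_distrib, Finset.sum_congr rfl combine, ← Finset.sum_mul]
    have goal2 : (∑ m ∈ range (N+1), f N m) * (x + y + N) - 0
        = (ascPochhammer ℝ (N+1)).eval (x+y) := by
      rw [ih, asc_eval_succ]; ring
    linarith [this, goal2]

lemma Gamma_add_nat' {γ : ℝ} (hγ : 0 < γ) (m : ℕ) :
    Real.Gamma (γ + m) = (ascPochhammer ℝ m).eval γ * Real.Gamma γ := by
  induction m with
  | zero => simp
  | succ m ih =>
    have hne : γ + m ≠ 0 := by positivity
    have : γ + (m + 1 : ℕ) = (γ + m) + 1 := by push_cast; ring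
    rw [this, Real.Gamma_add_one hne, ih, asc_eval_succ]
    ring

lemma cCoeff_eq {γ : ℝ} (hγ : 0 < γ) (m : ℕ) :
    cCoeff γ m = (ascPochhammer ℝ m).eval γ / m.factorial := by
  have hΓ : Real.Gamma γ ≠ 0 := ne_of_gt (Real.Gamma_pos_of_pos hγ)
  rw [cCoeff, Gamma_add_nat' hγ]
  push_cast
  rw [Real.Gamma_nat_eq_factorial]
  field_simp

lemma cCoeff_conv {γ δ : ℝ} (hγ : 0 < γ) (hδ : 0 < δ) (N : ℕ) :
    ∑ m ∈ range (N+1), cCoeff γ (N - m) * cCoeff δ m = cCoeff (γ + δ) N := by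
  have key : ∀ m ∈ range (N+1), cCoeff γ (N - m) * cCoeff δ m
      = ((N.choose m : ℝ) * ((ascPochhammer ℝ (N-m)).eval γ * (ascPochhammer ℝ m).eval δ))
        / N.factorial := by
    intro m hm
    have hmN : m ≤ N := Nat.lt_succ_iff.mp (Finset.mem_range.mp hm)
    have hfac : ((N.choose m : ℝ) * m.factorial * (N - m).factorial) = N.factorial := by
      rw [← Nat.cast_mul, ← Nat.cast_mul, Nat.choose_mul_factorial_mul_factorial hmN]
    rw [cCoeff_eq hγ, cCoeff_eq hδ]
    have h1 : ((N-m).factorial : ℝ) ≠ 0 := Nat.cast_ne_zero.mpr (Nat.factorial_ne_zero _)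
    have h2 : (m.factorial : ℝ) ≠ 0 := Nat.cast_ne_zero.mpr (Nat.factorial_ne_zero _)
    have h3 : (N.factorial : ℝ) ≠ 0 := Nat.cast_ne_zero.mpr (Nat.factorial_ne_zero _)
    field_simp
    linear_combination -((ascPochhammer ℝ (N - m)).eval γ * (ascPochhammer ℝ m).eval δ) * hfac
  rw [Finset.sum_congr rfl key, ← Finset.sum_div, asc_vandermonde, cCoeff_eq (by linarith)]

end Aux

theorem fracSum_phi_second_power_rule (h α β : ℝ) (hh : 0 < h)
    (hα1 : 0 < α) (hα2 : α ≤ 1) (hβ1 : 0 < β) (hβ2 : β ≤ 1)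
    (k s : ℕ) (n : ℕ) :
    fracSum h β (fun m : ℕ => phi h α β k s (m : ℤ)) n
      = phi h α β k (s + 1) (n : ℤ) := by
  by_cases hkn : k ≤ n
  case neg =>
    rw [fracSum, phi, if_neg (by exact_mod_cast hkn)]
    rw [Finset.sum_eq_zero, mul_zero]
    intro j hj
    have hj' := Finset.mem_range.mp hj
    have hjk : ¬ ((k:ℤ) ≤ (j:ℤ)) := by exact_mod_cast (by omega : ¬ k ≤ j)
    rw [phi, if_neg hjk, mul_zero]
  case pos =>
    set γ' : ℝ := (k:ℝ)*α + (s:ℝ)*β + 1 with hγ'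
    have hγ'pos : 0 < γ' := by positivity
    have hφ : ∀ m : ℕ, phi h α β k s ((k+m : ℕ) : ℤ)
        = cCoeff γ' m * h ^ ((k:ℝ)*α + (s:ℝ)*β) := by
      intro m
      rw [phi, if_pos (by exact_mod_cast Nat.le_add_right k m)]
      have e1 : ((((k+m:ℕ):ℤ)):ℝ) - k + 1 + ((k:ℝ)*α+(s:ℝ)*β) = γ' + m := by
        rw [hγ']; push_cast; ring
      have e2 : ((((k+m:ℕ):ℤ)):ℝ) - k + 1 = (m:ℝ) + 1 := by push_cast; ring
      rw [show ((((k+m:ℕ):ℤ)):ℝ) - ↑k + 1 + ↑k * α + ↑s * β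
            = ((((k+m:ℕ):ℤ)):ℝ) - ↑k + 1 + (↑k * α + ↑s * β) by ring, e1, e2, cCoeff, hγ']
    have hsum : ∑ j ∈ Finset.range (n+1), cCoeff β (n-j) * phi h α β k s (j : ℤ)
        = (∑ m ∈ Finset.range (n-k+1), cCoeff β ((n-k)-m) * cCoeff γ' m)
            * h ^ ((k:ℝ)*α + (s:ℝ)*β) := by
      rw [show Finset.range (n+1) = Finset.Ico 0 (n+1) by rw [Finset.range_eq_Ico],
        ← Finset.sum_Ico_consecutive _ (Nat.zero_le k) (by omega : k ≤ n+1)]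
      have hlow : ∑ j ∈ Finset.Ico 0 k, cCoeff β (n-j) * phi h α β k s (j : ℤ) = 0 := by
        apply Finset.sum_eq_zero
        intro j hj
        have : j < k := (Finset.mem_Ico.mp hj).2
        rw [phi, if_neg (by exact_mod_cast Nat.not_le.mpr this), mul_zero]
      rw [hlow, zero_add, Finset.sum_Ico_eq_sum_range]
      rw [show n + 1 - k = n - k + 1 by omega, Finset.sum_mul]
      apply Finset.sum_congr rfl
      intro m hm
      rw [hφ m, show n - (k + m) = n - k - m by omega]
      ring
    rw [fracSum, hsum, cCoeff_conv hβ1 hγ'pos, phi, if_pos (by exact_mod_cast hkn), cCoeff]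
    have e3 : β + γ' + ((n-k : ℕ) : ℝ)
        = (((n:ℤ)):ℝ) - (k:ℝ) + 1 + (k:ℝ)*α + ((s+1 : ℕ):ℝ)*β := by
      rw [hγ', Nat.cast_sub hkn]; push_cast; ring
    have e4 : β + γ' = (k:ℝ)*α + ((s+1 : ℕ):ℝ)*β + 1 := by
      rw [hγ']; push_cast; ring
    have e5 : ((n-k : ℕ) : ℝ) + 1 = (((n:ℤ)):ℝ) - (k:ℝ) + 1 := by
      rw [Nat.cast_sub hkn]; push_cast; ring
    rw [e3, e4, e5]
    have hpow : h ^ β * h ^ ((k:ℝ)*α + (s:ℝ)*β) = h ^ ((k:ℝ)*α + ((s+1:ℕ):ℝ)*β) := by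
      rw [← Real.rpow_add hh]; congr 1; push_cast; ring
    rw [← hpow]
    ring
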